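/- Let μ be a measure and let P be a measurable set with μ(P) > 0, and let P̃ ⊇ P be measurable with μ(P̃ \ P) ≤ t μ(P) for some 0 < t < 1/2. Let χ̃ be a measurable function with χ_P ≤ χ̃ ≤ χ_{P̃}. Then ‖ χ_P/μ(P) − χ̃ / ∫χ̃ dμ ‖_{L²(μ)} ≤ C t^{1/2} μ(P)^{-1/2}, with C an absolute constant. -/

import Mathlib

open MeasureTheory

/-- L² approximation of a normalized indicator: if χ_P ≤ χ̃ ≤ χ_{P̃} with μ(P̃ \ P) ≤ t μ(P),
    then ‖χ_P/μ(P) − χ̃/∫χ̃ dμ‖_{L²(μ)} ≤ C t^{1/2} μ(P)^{-1/2}. -/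
theorem stmt11 :
    ∃ C : ℝ, 0 < C ∧
      ∀ (α : Type) (_ : MeasurableSpace α) (μ : Measure α)
        (P Ptilde : Set α), MeasurableSet P → MeasurableSet Ptilde →
        P ⊆ Ptilde → 0 < μ P → μ Ptilde < ⊤ →
        ∀ t : ℝ, 0 < t → t < 1 / 2 →
          μ (Ptilde \ P) ≤ ENNReal.ofReal t * μ P →
          ∀ χ : α → ℝ, Measurable χ →
            (∀ x, Set.indicator P (fun _ => (1 : ℝ)) x ≤ χ x ∧
              χ x ≤ Set.indicator Ptilde (fun _ => (1 : ℝ)) x) →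
            eLpNorm (fun x =>
                Set.indicator P (fun _ => (1 : ℝ)) x / (μ P).toReal -
                  χ x / ∫ y, χ y ∂μ) 2 μ ≤
              ENNReal.ofReal (C * Real.sqrt t / Real.sqrt (μ P).toReal) := by
  refine ⟨2, by norm_num, ?_⟩
  intro α mα μ P Pt hP hPt hsub hμP hμPt t ht ht2 hdiff χ hχm hχb
  set a : ℝ := (μ P).toReal with ha_def
  have hμPfin : μ P < ⊤ := lt_of_le_of_lt (measure_mono hsub) hμPt
  have ha : 0 < a := ENNReal.toReal_pos hμP.ne' hμPfin.ne
  have hind_le : ∀ x, P.indicator (fun _ => (1:ℝ)) x ≤ χ x := fun x => (hχb x).1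
  have hχle : ∀ x, χ x ≤ Pt.indicator (fun _ => (1:ℝ)) x := fun x => (hχb x).2
  have hχ0 : ∀ x, 0 ≤ χ x := fun x =>
    le_trans (Set.indicator_nonneg (fun _ _ => by norm_num) x) (hind_le x)
  set g : α → ℝ := fun x => χ x - P.indicator (fun _ => (1:ℝ)) x with hg_def
  have hg0 : ∀ x, 0 ≤ g x := fun x => sub_nonneg.2 (hind_le x)
  have hgle : ∀ x, g x ≤ (Pt \ P).indicator (fun _ => (1:ℝ)) x := by
    intro x
    by_cases hxP : x ∈ P
    · have h1 : χ x ≤ 1 := by simpa [Set.indicator_of_mem (hsub hxP)] using hχle x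
      have : x ∉ Pt \ P := fun h => h.2 hxP
      simp only [hg_def, Set.indicator_of_mem hxP, Set.indicator_of_notMem this]
      linarith
    by_cases hxPt : x ∈ Pt
    · have hmem : x ∈ Pt \ P := ⟨hxPt, hxP⟩
      simp only [hg_def, Set.indicator_of_notMem hxP, Set.indicator_of_mem hmem]
      have := hχle x
      simpa [Set.indicator_of_mem hxPt] using this
    · have hx : χ x ≤ 0 := by simpa [Set.indicator_of_notMem hxPt] using hχle x
      have hnm : x ∉ Pt \ P := fun h => hxPt h.1
      simp only [hg_def, Set.indicator_of_notMem hxP, Set.indicator_of_notMem hnm]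
      linarith [hχ0 x]
  -- integrability
  have hPt_ind_int : Integrable (Pt.indicator (fun _ => (1:ℝ))) μ := by
    rw [integrable_indicator_iff hPt]
    exact integrableOn_const hμPt.ne
  have hχint : Integrable χ μ := by
    refine hPt_ind_int.mono' hχm.aestronglyMeasurable ?_
    filter_upwards with x
    rw [Real.norm_eq_abs, abs_of_nonneg (hχ0 x)]
    exact hχle x
  have hP_ind_int : Integrable (P.indicator (fun _ => (1:ℝ))) μ := by
    rw [integrable_indicator_iff hP]
    exact integrableOn_const hμPfin.ne
  have hD_ind_int : Integrable ((Pt \ P).indicator (fun _ => (1:ℝ))) μ := by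
    rw [integrable_indicator_iff (hPt.diff hP)]
    exact integrableOn_const (lt_of_le_of_lt (measure_mono Set.diff_subset) hμPt).ne
  set I : ℝ := ∫ y, χ y ∂μ with hI_def
  have hintP : ∫ x, P.indicator (fun _ => (1:ℝ)) x ∂μ = a := by
    rw [integral_indicator_const (1:ℝ) hP, smul_eq_mul, mul_one]; rfl
  have hIa : a ≤ I := by
    have := integral_mono hP_ind_int hχint hind_le
    rwa [hintP] at this
  have hI0 : 0 < I := lt_of_lt_of_le ha hIa
  have hdiffR : (μ (Pt \ P)).toReal ≤ t * a := by
    have h1 : (ENNReal.ofReal t * μ P) ≠ ⊤ := by finiteness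
    have := ENNReal.toReal_mono h1 hdiff
    rwa [ENNReal.toReal_mul, ENNReal.toReal_ofReal ht.le] at this
  have hgint : Integrable g μ := hχint.sub hP_ind_int
  have hIta : I ≤ a + t * a := by
    have h1 := integral_mono hgint hD_ind_int hgle
    rw [integral_indicator_const (1:ℝ) (hPt.diff hP), smul_eq_mul, mul_one] at h1
    have h2 : ∫ x, g x ∂μ = I - a := by
      simp only [hg_def]
      rw [integral_sub hχint hP_ind_int, hintP]
    rw [h2] at h1
    linarith [hdiffR, measureReal_def μ (Pt \ P)]
  -- the decomposition
  set c1 : ℝ := 1 / a - 1 / I with hc1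
  have hc1_0 : 0 ≤ c1 := by
    have : 1 / I ≤ 1 / a := one_div_le_one_div_of_le ha hIa
    simp only [hc1]; linarith
  have heq : (fun x => P.indicator (fun _ => (1:ℝ)) x / a - χ x / I)
      = (fun x => P.indicator (fun _ => c1) x + (-(1/I) * g x)) := by
    funext x
    by_cases hx : x ∈ P <;>
      simp only [hg_def, Set.indicator_of_mem, Set.indicator_of_notMem, hx,
        not_false_iff, hc1] <;>
      field_simp <;> ring
  have hmeas1 : AEStronglyMeasurable (P.indicator (fun _ => c1)) μ :=
    (measurable_const.indicator hP).aestronglyMeasurable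
  have hmeas2 : AEStronglyMeasurable (fun x => -(1/I) * g x) μ :=
    ((hχm.sub (measurable_const.indicator hP)).const_mul _).aestronglyMeasurable
  have hkey : eLpNorm (fun x => P.indicator (fun _ => (1:ℝ)) x / a - χ x / I) 2 μ
      ≤ eLpNorm (P.indicator (fun _ => c1)) 2 μ + eLpNorm (fun x => -(1/I) * g x) 2 μ := by
    rw [heq]
    exact eLpNorm_add_le hmeas1 hmeas2 one_le_two
  have h1 : eLpNorm (P.indicator (fun _ => c1)) 2 μ = ‖c1‖₊ * μ P ^ (1/2 : ℝ) := by
    rw [eLpNorm_indicator_const hP two_ne_zero ENNReal.ofNat_ne_top, enorm_eq_nnnorm]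
    norm_num
  have h2 : eLpNorm (fun x => -(1/I) * g x) 2 μ ≤ ‖(1/I : ℝ)‖₊ * μ (Pt \ P) ^ (1/2 : ℝ) := by
    have hmono : eLpNorm (fun x => -(1/I) * g x) 2 μ
        ≤ eLpNorm ((Pt \ P).indicator (fun _ => (1/I : ℝ))) 2 μ := by
      apply eLpNorm_mono
      intro x
      rw [Real.norm_eq_abs, Real.norm_eq_abs, abs_mul, abs_neg,
        abs_of_nonneg (by positivity : (0:ℝ) ≤ 1/I), abs_of_nonneg (hg0 x)]
      by_cases hx : x ∈ Pt \ P
      · rw [Set.indicator_of_mem hx]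
        have := hgle x
        rw [Set.indicator_of_mem hx] at this
        have hI' : (0:ℝ) ≤ 1/I := by positivity
        calc 1/I * g x ≤ 1/I * 1 := mul_le_mul_of_nonneg_left this hI'
          _ = 1/I := mul_one _
          _ ≤ |1/I| := le_abs_self _
      · rw [Set.indicator_of_notMem hx]
        have := hgle x
        rw [Set.indicator_of_notMem hx] at this
        have : g x = 0 := le_antisymm this (hg0 x)
        simp [this]
    have h2' : eLpNorm ((Pt \ P).indicator (fun _ => (1/I : ℝ))) 2 μ
        = ‖(1/I : ℝ)‖₊ * μ (Pt \ P) ^ (1/2 : ℝ) := by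
      rw [eLpNorm_indicator_const (hPt.diff hP) two_ne_zero ENNReal.ofNat_ne_top, enorm_eq_nnnorm]
      norm_num
    rwa [h2'] at hmono
  -- numeric conversions
  have hsa : 0 < Real.sqrt a := Real.sqrt_pos.2 ha
  have hst : 0 < Real.sqrt t := Real.sqrt_pos.2 ht
  have hsaa : Real.sqrt a * Real.sqrt a = a := Real.mul_self_sqrt ha.le
  have hstt : Real.sqrt t * Real.sqrt t = t := Real.mul_self_sqrt ht.le
  have hst1 : Real.sqrt t ≤ 1 := Real.sqrt_le_one.mpr (by linarith)
  have htle : t ≤ Real.sqrt t := by nlinarith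
  have hμPof : μ P = ENNReal.ofReal a := (ENNReal.ofReal_toReal hμPfin.ne).symm
  have hrpa : μ P ^ (1/2 : ℝ) = ENNReal.ofReal (Real.sqrt a) := by
    rw [hμPof, ENNReal.ofReal_rpow_of_nonneg ha.le (by norm_num), Real.sqrt_eq_rpow]
  have hrpD : μ (Pt \ P) ^ (1/2 : ℝ) ≤ ENNReal.ofReal (Real.sqrt t * Real.sqrt a) := by
    calc μ (Pt \ P) ^ (1/2 : ℝ) ≤ (ENNReal.ofReal t * μ P) ^ (1/2 : ℝ) :=
          ENNReal.rpow_le_rpow hdiff (by norm_num)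
      _ = ENNReal.ofReal (t * a) ^ (1/2 : ℝ) := by
          rw [hμPof, ← ENNReal.ofReal_mul ht.le]
      _ = ENNReal.ofReal ((t * a) ^ (1/2 : ℝ)) := by
          rw [ENNReal.ofReal_rpow_of_nonneg (by positivity) (by norm_num)]
      _ = ENNReal.ofReal (Real.sqrt t * Real.sqrt a) := by
          rw [← Real.sqrt_eq_rpow, Real.sqrt_mul ht.le]
  have hn1 : (‖c1‖₊ : ENNReal) = ENNReal.ofReal c1 := by rw [← enorm_eq_nnnorm]; exact Real.enorm_eq_ofReal hc1_0
  have hn2 : (‖(1/I : ℝ)‖₊ : ENNReal) = ENNReal.ofReal (1/I) :=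
    by rw [← enorm_eq_nnnorm]; exact Real.enorm_eq_ofReal (by positivity)
  -- final real inequality
  have hc1le : c1 ≤ t / a := by
    rw [hc1, div_sub_div _ _ ha.ne' hI0.ne', div_le_div_iff₀ (by positivity) ha]
    nlinarith
  have hreal : c1 * Real.sqrt a + (1/I) * (Real.sqrt t * Real.sqrt a)
      ≤ 2 * Real.sqrt t / Real.sqrt a := by
    have hterm1 : c1 * Real.sqrt a ≤ Real.sqrt t / Real.sqrt a := by
      have h2 : (t / a) * Real.sqrt a = t / Real.sqrt a := by
        field_simp
        linear_combination hsaa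
      have h3 : t / Real.sqrt a ≤ Real.sqrt t / Real.sqrt a := by gcongr
      calc c1 * Real.sqrt a ≤ (t / a) * Real.sqrt a :=
            mul_le_mul_of_nonneg_right hc1le hsa.le
        _ = t / Real.sqrt a := h2
        _ ≤ Real.sqrt t / Real.sqrt a := h3
    have hterm2 : (1/I) * (Real.sqrt t * Real.sqrt a) ≤ Real.sqrt t / Real.sqrt a := by
      have hIinv : (1:ℝ)/I ≤ 1/a := one_div_le_one_div_of_le ha hIa
      have h1 : (1/I) * (Real.sqrt t * Real.sqrt a) ≤ (1/a) * (Real.sqrt t * Real.sqrt a) :=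
        mul_le_mul_of_nonneg_right hIinv (by positivity)
      have h2 : (1/a) * (Real.sqrt t * Real.sqrt a) = Real.sqrt t / Real.sqrt a := by
        field_simp
        linear_combination hsaa
      calc (1/I) * (Real.sqrt t * Real.sqrt a) ≤ (1/a) * (Real.sqrt t * Real.sqrt a) := h1
        _ = Real.sqrt t / Real.sqrt a := h2
    have hsplit : 2 * Real.sqrt t / Real.sqrt a
        = Real.sqrt t / Real.sqrt a + Real.sqrt t / Real.sqrt a := by ring
    linarith
  -- put everything together
  calc eLpNorm (fun x => P.indicator (fun _ => (1:ℝ)) x / a - χ x / I) 2 μ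
      ≤ eLpNorm (P.indicator (fun _ => c1)) 2 μ + eLpNorm (fun x => -(1/I) * g x) 2 μ := hkey
    _ ≤ ENNReal.ofReal c1 * ENNReal.ofReal (Real.sqrt a)
        + ENNReal.ofReal (1/I) * ENNReal.ofReal (Real.sqrt t * Real.sqrt a) := by
        gcongr
        · rw [h1, hn1, hrpa]
        · exact h2.trans (by rw [hn2]; gcongr)
    _ = ENNReal.ofReal (c1 * Real.sqrt a + (1/I) * (Real.sqrt t * Real.sqrt a)) := by
        rw [← ENNReal.ofReal_mul hc1_0, ← ENNReal.ofReal_mul (by positivity),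
          ← ENNReal.ofReal_add (by positivity) (by positivity)]
    _ ≤ ENNReal.ofReal (2 * Real.sqrt t / Real.sqrt a) := ENNReal.ofReal_le_ofReal hreal
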